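/- Let M be a symmetric positive definite n×n real matrix, let μ : ℝⁿ → (m×n real matrices) assign to each configuration a rank-m constraint matrix, and let Q(q) := M⁻¹μ(q)ᵀ(μ(q)M⁻¹μ(q)ᵀ)⁻¹μ(q). Suppose a sequence of momenta satisfies the GNI update p_{k+1/2} = (Id − 2Q(q_k)ᵀ) p_{k−1/2} for all k (the potential-free case V = 0). Then the kinetic energy ½ p_{k+1/2}ᵀ M⁻¹ p_{k+1/2} is the same for all k; i.e. in the absence of a potential the geometric nonholonomic integrator exactly preserves energy. -/

import Mathlib

open Matrix

lemma gni_reflection_identity {n m : ℕ}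
    (M : Matrix (Fin n) (Fin n) ℝ) (hM : M.PosDef) (hMsymm : M.IsSymm)
    (N : Matrix (Fin m) (Fin n) ℝ) (hN : N.rank = m) :
    (1 - (2:ℝ) • (M⁻¹ * Nᵀ * (N * M⁻¹ * Nᵀ)⁻¹ * N)) * M⁻¹ *
      (1 - (2:ℝ) • (M⁻¹ * Nᵀ * (N * M⁻¹ * Nᵀ)⁻¹ * N)ᵀ) = M⁻¹ := by
  set B := M⁻¹ with hBdef
  have hB : B.PosDef := hM.inv
  have hBsymm : Bᵀ = B := by
    rw [hBdef, Matrix.transpose_nonsing_inv, hMsymm.eq]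
  set S := N * B * Nᵀ with hSdef
  set Q := B * Nᵀ * S⁻¹ * N with hQdef
  -- injectivity of x ↦ Nᵀ x from the rank hypothesis
  have hinj : Function.Injective (Nᵀ.mulVec) := by
    rw [Matrix.mulVec_injective_iff, Matrix.col_transpose,
      linearIndependent_iff_card_eq_finrank_span]
    simp [Set.finrank, ← Matrix.rank_eq_finrank_span_row, hN]
  -- S is positive definite
  have hSpd : S.PosDef := by
    refine Matrix.PosDef.of_dotProduct_mulVec_pos ?_ ?_
    · rw [Matrix.IsHermitian, conjTranspose_eq_transpose_of_trivial, hSdef,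
        Matrix.transpose_mul, Matrix.transpose_mul, transpose_transpose, hBsymm,
        Matrix.mul_assoc]
    · intro x hx
      have hx' : Nᵀ.mulVec x ≠ 0 := fun h => hx (hinj (by simpa using h))
      have h0 := hB.dotProduct_mulVec_pos hx'
      calc (0:ℝ) < dotProduct (star (Nᵀ.mulVec x)) (B.mulVec (Nᵀ.mulVec x)) := h0
        _ = dotProduct (star x) (S.mulVec x) := by
            have h1 : S *ᵥ x = N *ᵥ (B *ᵥ (Nᵀ *ᵥ x)) := by
              rw [hSdef, ← Matrix.mulVec_mulVec, ← Matrix.mulVec_mulVec]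
            rw [h1, star_trivial, star_trivial, Matrix.dotProduct_mulVec x N,
              ← Matrix.mulVec_transpose N x]
  have hSdet : IsUnit S.det := (Matrix.isUnit_iff_isUnit_det S).mp hSpd.isUnit
  have hSinv : S⁻¹ * S = 1 := Matrix.nonsing_inv_mul S hSdet
  have hSsymm : Sᵀ = S := by
    rw [hSdef, Matrix.transpose_mul, Matrix.transpose_mul, transpose_transpose, hBsymm,
      Matrix.mul_assoc]
  have hSinvsymm : (S⁻¹)ᵀ = S⁻¹ := by
    conv_rhs => rw [← hSsymm]
    rw [Matrix.transpose_nonsing_inv]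
  have hQt : Qᵀ = Nᵀ * S⁻¹ * (N * B) := by
    rw [hQdef, Matrix.transpose_mul, Matrix.transpose_mul, Matrix.transpose_mul,
      transpose_transpose, hSinvsymm, hBsymm]
    simp only [Matrix.mul_assoc]
  have hBQt : B * Qᵀ = Q * B := by
    rw [hQt, hQdef]; simp only [Matrix.mul_assoc]
  have hQBQt : Q * (B * Qᵀ) = Q * B := by
    rw [hBQt, hQdef]
    have h2 : B * Nᵀ * S⁻¹ * N * (B * Nᵀ * S⁻¹ * N * B)
        = B * Nᵀ * (S⁻¹ * S * S⁻¹) * (N * B) := by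
      rw [hSdef]; simp only [Matrix.mul_assoc]
    rw [h2, hSinv, Matrix.one_mul]
    simp only [Matrix.mul_assoc]
  have expand : (1 - (2:ℝ) • Q) * B * (1 - (2:ℝ) • Qᵀ)
      = B - (2:ℝ) • (Q * B) - (2:ℝ) • (B * Qᵀ) + (4:ℝ) • (Q * (B * Qᵀ)) := by
    simp only [Matrix.sub_mul, Matrix.mul_sub, Matrix.smul_mul, Matrix.mul_smul,
      Matrix.one_mul, Matrix.mul_one, smul_smul, Matrix.mul_assoc]
    module
  rw [expand, hQBQt, hBQt]
  module

/-- In the potential-free case, the GNI momentum update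
`p_{k+1/2} = (Id − 2 Q(q_k)ᵀ) p_{k−1/2}` exactly preserves the kinetic energy
`½ pᵀ M⁻¹ p`. -/
theorem gni_energy_preservation {n m : ℕ}
    (M : Matrix (Fin n) (Fin n) ℝ) (hM : M.PosDef) (hMsymm : M.IsSymm)
    (μ : (Fin n → ℝ) → Matrix (Fin m) (Fin n) ℝ) (hμ : ∀ q, (μ q).rank = m)
    (Q : (Fin n → ℝ) → Matrix (Fin n) (Fin n) ℝ)
    (hQ : ∀ q, Q q = M⁻¹ * (μ q)ᵀ * (μ q * M⁻¹ * (μ q)ᵀ)⁻¹ * μ q)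
    (q p : ℕ → Fin n → ℝ)
    (hupd : ∀ k, p (k + 1) =
      ((1 : Matrix (Fin n) (Fin n) ℝ) - (2 : ℝ) • (Q (q k))ᵀ).mulVec (p k)) :
    ∀ k, (1 / 2 : ℝ) * dotProduct (p k) (M⁻¹.mulVec (p k)) =
      (1 / 2 : ℝ) * dotProduct (p 0) (M⁻¹.mulVec (p 0)) := by
  intro k
  induction k with
  | zero => rfl
  | succ k ih =>
    rw [← ih, hupd k]
    congr 1
    set R := (1 : Matrix (Fin n) (Fin n) ℝ) - (2 : ℝ) • (Q (q k))ᵀ with hR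
    have hRt : Rᵀ = 1 - (2:ℝ) • (Q (q k)) := by
      rw [hR, Matrix.transpose_sub, Matrix.transpose_smul, Matrix.transpose_one,
        transpose_transpose]
    have hkey : Rᵀ * M⁻¹ * R = M⁻¹ := by
      rw [hRt, hR, hQ]
      exact gni_reflection_identity M hM hMsymm (μ (q k)) (hμ (q k))
    calc dotProduct (R *ᵥ p k) (M⁻¹ *ᵥ (R *ᵥ p k))
        = dotProduct (p k ᵥ* Rᵀ) ((M⁻¹ * R) *ᵥ p k) := by
          rw [Matrix.vecMul_transpose, Matrix.mulVec_mulVec]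
      _ = dotProduct (p k ᵥ* Rᵀ ᵥ* (M⁻¹ * R)) (p k) := by
          rw [Matrix.dotProduct_mulVec]
      _ = dotProduct (p k ᵥ* (Rᵀ * M⁻¹ * R)) (p k) := by
          rw [Matrix.vecMul_vecMul, Matrix.mul_assoc]
      _ = dotProduct (p k) (M⁻¹ *ᵥ p k) := by
          rw [hkey, ← Matrix.dotProduct_mulVec]
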